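/- Let B be an N×N strongly infinitely divisible nonnegative matrix and Q a Z-matrix with exp(−Q) = B. If i ≠ j and B_{ij} = 0, then (exp(−tQ))_{ij} = 0 for every real number t. -/

import Mathlib

open Matrix

/-- A real square matrix is (entrywise) nonnegative if all of its entries are nonnegative. -/
def IsNonnegMatrix {ι : Type*} (B : Matrix ι ι ℝ) : Prop :=
  ∀ i j, 0 ≤ B i j

/-- A Z-matrix is a real square matrix all of whose off-diagonal entries are nonpositive. -/
def IsZMatrix {ι : Type*} (Q : Matrix ι ι ℝ) : Prop :=
  ∀ i j, i ≠ j → Q i j ≤ 0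

/-- A nonnegative matrix `B` is infinitely divisible if for every positive integer `n`
there exists a nonnegative matrix `K` with `K ^ n = B`. -/
def IsInfinitelyDivisible {ι : Type*} [Fintype ι] [DecidableEq ι] (B : Matrix ι ι ℝ) : Prop :=
  ∀ n : ℕ, 0 < n → ∃ K : Matrix ι ι ℝ, IsNonnegMatrix K ∧ K ^ n = B

/-- `B` is strongly infinitely divisible if it is infinitely divisible and `det B > 0`. -/
def IsStronglyInfinitelyDivisible {ι : Type*} [Fintype ι] [DecidableEq ι]
    (B : Matrix ι ι ℝ) : Prop :=
  IsInfinitelyDivisible B ∧ 0 < B.det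

/-- An inverse M-matrix is an invertible nonnegative matrix whose inverse is a Z-matrix. -/
def IsInverseMMatrix {ι : Type*} [Fintype ι] [DecidableEq ι] (K : Matrix ι ι ℝ) : Prop :=
  IsUnit K.det ∧ IsNonnegMatrix K ∧ IsZMatrix K⁻¹

/-- A stochastic matrix is a nonnegative square matrix each of whose rows sums to `1`. -/
def IsStochasticMatrix {ι : Type*} [Fintype ι] (P : Matrix ι ι ℝ) : Prop :=
  IsNonnegMatrix P ∧ ∀ i, ∑ j, P i j = 1

/-- An intensity matrix is a real square matrix whose off-diagonal entries are nonnegative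
and each of whose rows sums to `0`. -/
def IsIntensityMatrix {ι : Type*} [Fintype ι] (R : Matrix ι ι ℝ) : Prop :=
  (∀ i j, i ≠ j → 0 ≤ R i j) ∧ ∀ i, ∑ j, R i j = 0


namespace Stmt10Aux

variable {N : ℕ}

/-- Entry evaluation as an additive monoid hom. -/
def entryHom (i j : Fin N) : Matrix (Fin N) (Fin N) ℝ →+ ℝ where
  toFun M := M i j
  map_zero' := rfl
  map_add' _ _ := rfl

theorem continuous_entry (i j : Fin N) :
    Continuous fun M : Matrix (Fin N) (Fin N) ℝ => M i j :=
  (continuous_apply j).comp (continuous_apply (A := fun _ : Fin N => Fin N → ℝ) i)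

theorem entry_hasSum {f : ℕ → Matrix (Fin N) (Fin N) ℝ} {S : Matrix (Fin N) (Fin N) ℝ}
    (h : HasSum f S) (i j : Fin N) : HasSum (fun n => f n i j) (S i j) :=
  h.map (entryHom i j) (continuous_entry i j)

theorem pow_entry_nonneg {M : Matrix (Fin N) (Fin N) ℝ} (hM : ∀ i j, 0 ≤ M i j) (n : ℕ) :
    ∀ i j, 0 ≤ (M ^ n) i j := by
  induction n with
  | zero =>
    intro i j
    rw [pow_zero, Matrix.one_apply]
    split <;> norm_num
  | succ n ih =>
    intro i j
    rw [pow_succ, Matrix.mul_apply]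
    exact Finset.sum_nonneg fun k _ => mul_nonneg (ih i k) (hM k j)

theorem exp_hasSum (A : Matrix (Fin N) (Fin N) ℝ) :
    HasSum (fun n : ℕ => ((Nat.factorial n : ℝ))⁻¹ • A ^ n) (NormedSpace.exp A) := by
  letI : SeminormedRing (Matrix (Fin N) (Fin N) ℝ) := Matrix.linftyOpSemiNormedRing
  letI : NormedRing (Matrix (Fin N) (Fin N) ℝ) := Matrix.linftyOpNormedRing
  letI : NormedAlgebra ℝ (Matrix (Fin N) (Fin N) ℝ) := Matrix.linftyOpNormedAlgebra
  rw [NormedSpace.exp_eq_tsum ℝ]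
  exact (NormedSpace.expSeries_summable' (𝕂 := ℝ) A).hasSum

theorem exp_entry_hasSum (A : Matrix (Fin N) (Fin N) ℝ) (i j : Fin N) :
    HasSum (fun n : ℕ => ((Nat.factorial n : ℝ))⁻¹ * (A ^ n) i j) (NormedSpace.exp A i j) := by
  have h := entry_hasSum (exp_hasSum A) i j
  simpa [Matrix.smul_apply, smul_eq_mul] using h

theorem exp_smul_one (c : ℝ) :
    NormedSpace.exp (c • (1 : Matrix (Fin N) (Fin N) ℝ)) = Real.exp c • 1 := by
  letI : SeminormedRing (Matrix (Fin N) (Fin N) ℝ) := Matrix.linftyOpSemiNormedRing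
  letI : NormedRing (Matrix (Fin N) (Fin N) ℝ) := Matrix.linftyOpNormedRing
  letI : NormedAlgebra ℝ (Matrix (Fin N) (Fin N) ℝ) := Matrix.linftyOpNormedAlgebra
  have h1 : c • (1 : Matrix (Fin N) (Fin N) ℝ) = algebraMap ℝ _ c :=
    (Algebra.algebraMap_eq_smul_one c).symm
  rw [h1]
  convert (NormedSpace.algebraMap_exp_comm (𝔸 := Matrix (Fin N) (Fin N) ℝ) c).symm using 1
  · rfl
  · rw [Algebra.algebraMap_eq_smul_one,
      Real.exp_eq_exp_ℝ]

end Stmt10Aux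

theorem stmt10 (N : ℕ) (B Q : Matrix (Fin N) (Fin N) ℝ) (hBnn : IsNonnegMatrix B)
    (hBdiv : IsStronglyInfinitelyDivisible B) (hQ : IsZMatrix Q)
    (hQB : NormedSpace.exp (-Q) = B)
    (i j : Fin N) (hij : i ≠ j) (hB0 : B i j = 0) :
    ∀ t : ℝ, (NormedSpace.exp (-(t • Q))) i j = 0 := by
  classical
  intro t
  set s : ℝ := ∑ k, |Q k k| with hs
  set M : Matrix (Fin N) (Fin N) ℝ := s • 1 - Q with hM
  have hMnn : ∀ a b, 0 ≤ M a b := by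
    intro a b
    by_cases h : a = b
    · subst h
      have h1 : |Q a a| ≤ s :=
        Finset.single_le_sum (f := fun k => |Q k k|) (fun k _ => abs_nonneg _)
          (Finset.mem_univ a)
      have h2 : M a a = s - Q a a := by
        simp [hM, Matrix.sub_apply, Matrix.smul_apply, Matrix.one_apply_eq, smul_eq_mul]
      rw [h2]
      linarith [le_abs_self (Q a a)]
    · have h2 : M a b = -Q a b := by
        simp [hM, Matrix.sub_apply, Matrix.smul_apply, Matrix.one_apply_ne h, smul_eq_mul]
      rw [h2]
      linarith [hQ a b h]
  have key : ∀ u : ℝ, -(u • Q) = u • M + (-(u * s)) • (1 : Matrix (Fin N) (Fin N) ℝ) := by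
    intro u
    rw [hM]
    module
  have exp_split : ∀ u : ℝ, NormedSpace.exp (-(u • Q)) =
      Real.exp (-(u * s)) • NormedSpace.exp (u • M) := by
    intro u
    rw [key u, Matrix.exp_add_of_commute _ _ ((Commute.one_right (u • M)).smul_right _),
      Stmt10Aux.exp_smul_one, mul_smul_comm, mul_one]
  have hexpM0 : NormedSpace.exp M i j = 0 := by
    have h1 := exp_split 1
    rw [one_smul, one_smul, one_mul, hQB] at h1
    have h2 : B i j = Real.exp (-s) * NormedSpace.exp M i j := by
      rw [h1]; rfl
    rw [hB0] at h2
    have h3 : Real.exp (-s) ≠ 0 := (Real.exp_pos _).ne'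
    field_simp at h2
    exact (mul_eq_zero.mp h2.symm).resolve_left h3
  have hsum := Stmt10Aux.exp_entry_hasSum M i j
  rw [hexpM0] at hsum
  have hpow : ∀ n : ℕ, (M ^ n) i j = 0 := by
    intro n
    have hnn : ∀ m : ℕ, 0 ≤ ((Nat.factorial m : ℝ))⁻¹ * (M ^ m) i j := fun m =>
      mul_nonneg (by positivity) (Stmt10Aux.pow_entry_nonneg hMnn m i j)
    have hle := le_hasSum hsum n fun m _ => hnn m
    have heq : ((Nat.factorial n : ℝ))⁻¹ * (M ^ n) i j = 0 := le_antisymm hle (hnn n)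
    have hfac : ((Nat.factorial n : ℝ))⁻¹ ≠ 0 := by positivity
    exact (mul_eq_zero.mp heq).resolve_left hfac
  have hsum2 := Stmt10Aux.exp_entry_hasSum (t • M) i j
  have hzero : ∀ n : ℕ, ((Nat.factorial n : ℝ))⁻¹ * ((t • M) ^ n) i j = 0 := by
    intro n
    rw [smul_pow, Matrix.smul_apply, hpow n]
    simp
  have htM : NormedSpace.exp (t • M) i j = 0 := by
    have h0 : HasSum (fun _ : ℕ => (0 : ℝ)) (NormedSpace.exp (t • M) i j) := by
      simpa [hzero] using hsum2
    simpa using h0.unique hasSum_zero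
  rw [exp_split t]
  rw [Matrix.smul_apply, htM]
  simp
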